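/- arXiv:1307.5188 — 2 statements merged into one kernel-verified Lean document; each statement's English description precedes it below -/
import Mathlib

section
/- For every integer k and every integer n ≥ 1, the n-th poly-Cauchy number of the first kind satisfies C_n^(k) = (1/n) Σ_{l=0}^{n} (-1)^{n-l} (n-l)! C(n,l) ( T_l^{(1,k-1)} − T_l^{(1,k)} ), where the numbers T_n^{(r,k)} are defined by the generating function (t/log(1+t))^r · Lif_k(log(1+t)) = Σ_{n≥0} T_n^{(r,k)} t^n/n!. -/
open PowerSeries Finset

/-- Composition `F(G(t))` of formal power series (intended for `G` with zero
constant term, in which case `coeff n (G ^ m) = 0` for `m > n` and the finite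
sum below computes the usual composition). -/
noncomputable def psComp (F G : PowerSeries ℝ) : PowerSeries ℝ :=
  PowerSeries.mk fun n => ∑ m ∈ Finset.range (n + 1),
    (PowerSeries.coeff (R := ℝ) m F) * (PowerSeries.coeff (R := ℝ) n (G ^ m))

/-- The formal power series of `log (1 + t)`. -/
noncomputable def logSeries : PowerSeries ℝ :=
  PowerSeries.mk fun n => if n = 0 then 0 else (-1) ^ (n + 1) / n

/-- The polylogarithm factorial function `Lif_k(t) = ∑_{m ≥ 0} t^m / (m! (m+1)^k)`. -/
noncomputable def Lif (k : ℤ) : PowerSeries ℝ :=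
  PowerSeries.mk fun m => 1 / ((m.factorial : ℝ) * ((m : ℝ) + 1) ^ k)

/-- The poly-Cauchy polynomial of the first kind `C_n^{(k)}(x)`, defined by
`Lif_k(log(1+t)) / (1+t)^x = ∑_{n ≥ 0} C_n^{(k)}(x) t^n / n!`, where
`(1+t)^{-x} = exp (-x · log (1+t))`. -/
noncomputable def polyCauchy (k : ℤ) (n : ℕ) (x : ℝ) : ℝ :=
  (n.factorial : ℝ) * PowerSeries.coeff (R := ℝ) n
    (psComp (Lif k) logSeries *
      psComp (PowerSeries.rescale (-x) (PowerSeries.exp ℝ)) logSeries)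

/-- The (signed) Stirling numbers of the first kind `S₁(l, m)`, defined by
`(log (1+t))^m = m! ∑_{l ≥ m} S₁(l,m) t^l / l!`. -/
noncomputable def S1 (l m : ℕ) : ℝ :=
  (l.factorial : ℝ) / (m.factorial : ℝ) * PowerSeries.coeff (R := ℝ) l (logSeries ^ m)

/-- The ordinary Bernoulli numbers, via `t/(e^t - 1) = ∑ B_n t^n/n!`;
here `(mk fun m => 1/(m+1)!)` is the series `(e^t - 1)/t`. -/
noncomputable def Bern (n : ℕ) : ℝ :=
  (n.factorial : ℝ) * PowerSeries.coeff (R := ℝ) n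
    (PowerSeries.mk fun m => (1 : ℝ) / (m + 1).factorial)⁻¹

/-- The Bernoulli polynomial of order `r`, via `(t/(e^t-1))^r e^{xt} = ∑ B_n^{(r)}(x) t^n/n!`. -/
noncomputable def bernPoly (r : ℕ) (n : ℕ) (x : ℝ) : ℝ :=
  (n.factorial : ℝ) * PowerSeries.coeff (R := ℝ) n
    (((PowerSeries.mk fun m => (1 : ℝ) / (m + 1).factorial)⁻¹) ^ r *
      PowerSeries.rescale x (PowerSeries.exp ℝ))

/-- The series `log(1+t)/t`, so that `t / log(1+t) = Dlog⁻¹`. -/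
noncomputable def Dlog : PowerSeries ℝ :=
  PowerSeries.mk fun n => (-1) ^ n / ((n : ℝ) + 1)

/-- The Cauchy numbers of the first kind, via `t/log(1+t) = ∑ C_n t^n/n!`. -/
noncomputable def cauchyNum (n : ℕ) : ℝ :=
  (n.factorial : ℝ) * PowerSeries.coeff (R := ℝ) n Dlog⁻¹

/-- The numbers `T_n^{(r,k)}`, via
`(t/log(1+t))^r · Lif_k(log(1+t)) = ∑ T_n^{(r,k)} t^n/n!`. -/
noncomputable def T (r : ℕ) (k : ℤ) (n : ℕ) : ℝ :=
  (n.factorial : ℝ) * PowerSeries.coeff (R := ℝ) n (Dlog⁻¹ ^ r * psComp (Lif k) logSeries)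

/-- The rising factorial `x^{(m)} = x (x+1) ⋯ (x+m-1)`. -/
noncomputable def risingFactorial (x : ℝ) (m : ℕ) : ℝ :=
  ∏ i ∈ Finset.range m, (x + i)

/-- Carlitz's polynomials `β_n^{(r)}(x)`, via `(t/log(1+t))^r (1+t)^x = ∑ β_n^{(r)}(x) t^n/n!`,
where `(1+t)^x = exp (x log (1+t))`. -/
noncomputable def carlitz (r : ℕ) (n : ℕ) (x : ℝ) : ℝ :=
  (n.factorial : ℝ) * PowerSeries.coeff (R := ℝ) n
    (Dlog⁻¹ ^ r * psComp (PowerSeries.rescale x (PowerSeries.exp ℝ)) logSeries)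

lemma constantCoeff_logSeries : constantCoeff (R := ℝ) logSeries = 0 := by
  simp [logSeries, ← coeff_zero_eq_constantCoeff]

lemma coeff_logSeries_pow_eq_zero {n m : ℕ} (h : n < m) :
    coeff (R := ℝ) n (logSeries ^ m) = 0 := by
  obtain ⟨q, hq⟩ : (X : ℝ⟦X⟧) ^ m ∣ logSeries ^ m :=
    pow_dvd_pow_of_dvd (X_dvd_iff.mpr constantCoeff_logSeries) m
  rw [hq, coeff_X_pow_mul', if_neg (by omega)]

lemma derivative_logSeries : d⁄dX ℝ logSeries = mk fun n => (-1) ^ n := by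
  ext n
  rw [coeff_derivative]
  simp only [logSeries, coeff_mk, Nat.succ_ne_zero, if_false]
  have h : ((n : ℝ) + 1) ≠ 0 := by positivity
  push_cast
  field_simp
  ring

lemma onePlusX_mul_dlog : (1 + X) * d⁄dX ℝ logSeries = 1 := by
  rw [derivative_logSeries]
  ext n
  rw [add_mul, one_mul, map_add]
  cases n with
  | zero => simp
  | succ n => simp [coeff_succ_X_mul, coeff_mk, pow_succ]

lemma pow_key (m : ℕ) :
    logSeries * ((1 + X) * d⁄dX ℝ (logSeries ^ m)) = (m : ℝ⟦X⟧) * logSeries ^ m := by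
  rw [Derivation.leibniz_pow]
  cases m with
  | zero => simp
  | succ m =>
    have h := onePlusX_mul_dlog
    simp only [Nat.add_sub_cancel, nsmul_eq_mul, smul_eq_mul]
    linear_combination (((m:ℕ)+1 : ℕ) : ℝ⟦X⟧) * logSeries ^ (m+1) * h

lemma coeff_psComp_log (F : ℝ⟦X⟧) {n N : ℕ} (h : n ≤ N) :
    coeff (R := ℝ) n (psComp F logSeries) =
      ∑ m ∈ Finset.range (N + 1), (coeff (R := ℝ) m F) * (coeff (R := ℝ) n (logSeries ^ m)) := by
  rw [psComp, coeff_mk]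
  apply Finset.sum_subset
  · exact Finset.range_subset_range.2 (by omega)
  · intro m hm hm'
    rw [coeff_logSeries_pow_eq_zero (by simp at hm hm' ⊢; omega), mul_zero]

lemma coeff_mul_congr {F G P : ℝ⟦X⟧} {n : ℕ} (h : ∀ j ≤ n, coeff (R := ℝ) j F = coeff (R := ℝ) j G) :
    coeff (R := ℝ) n (P * F) = coeff (R := ℝ) n (P * G) := by
  rw [coeff_mul, coeff_mul]
  refine Finset.sum_congr rfl fun p hp => ?_
  rw [Finset.HasAntidiagonal.mem_antidiagonal] at hp
  rw [h p.2 (by omega)]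

lemma coeff_derivative_congr {F G : ℝ⟦X⟧} {n : ℕ}
    (h : ∀ j ≤ n + 1, coeff (R := ℝ) j F = coeff (R := ℝ) j G) :
    ∀ j ≤ n, coeff (R := ℝ) j (d⁄dX ℝ F) = coeff (R := ℝ) j (d⁄dX ℝ G) := by
  intro j hj
  rw [coeff_derivative, coeff_derivative, h (j+1) (by omega)]

lemma lif_scalar (k : ℤ) (m : ℕ) :
    (m : ℝ) * (1 / ((m.factorial : ℝ) * ((m : ℝ) + 1) ^ k)) =
      1 / ((m.factorial : ℝ) * ((m : ℝ) + 1) ^ (k - 1)) -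
      1 / ((m.factorial : ℝ) * ((m : ℝ) + 1) ^ k) := by
  have h1 : ((m : ℝ) + 1) ≠ 0 := by positivity
  have hf : ((m.factorial : ℝ)) ≠ 0 := by positivity
  have hz : ((m : ℝ) + 1) ^ k ≠ 0 := zpow_ne_zero _ h1
  have hz2 : ((m : ℝ) + 1) ^ (k - 1) ≠ 0 := zpow_ne_zero _ h1
  have hk : ((m : ℝ) + 1) ^ k = ((m : ℝ) + 1) ^ (k - 1) * ((m : ℝ) + 1) := by
    rw [← zpow_add_one₀ h1, sub_add_cancel]
  field_simp
  rw [hk]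
  ring

noncomputable def trS (k : ℤ) (N : ℕ) : ℝ⟦X⟧ :=
  ∑ m ∈ Finset.range (N + 1),
    C (R := ℝ) (1 / ((m.factorial : ℝ) * ((m : ℝ) + 1) ^ k)) * logSeries ^ m

lemma coeff_psComp_Lif_eq_trS (k : ℤ) {n N : ℕ} (h : n ≤ N) :
    coeff (R := ℝ) n (psComp (Lif k) logSeries) = coeff (R := ℝ) n (trS k N) := by
  rw [coeff_psComp_log _ h, trS, map_sum]
  refine Finset.sum_congr rfl fun m _ => ?_
  rw [coeff_C_mul, Lif, coeff_mk]

lemma key_trS (k : ℤ) (N : ℕ) :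
    logSeries * ((1 + X) * d⁄dX ℝ (trS k N)) = trS (k - 1) N - trS k N := by
  simp only [trS, map_sum, ← Finset.sum_sub_distrib, Finset.mul_sum]
  refine Finset.sum_congr rfl fun m _ => ?_
  rw [Derivation.leibniz, derivative_C, smul_zero, add_zero, smul_eq_mul]
  calc logSeries * ((1 + X) * (C (R := ℝ) (1 / ((m.factorial : ℝ) * ((m : ℝ) + 1) ^ k)) *
          d⁄dX ℝ (logSeries ^ m)))
      = C (R := ℝ) (1 / ((m.factorial : ℝ) * ((m : ℝ) + 1) ^ k)) *
          (logSeries * ((1 + X) * d⁄dX ℝ (logSeries ^ m))) := by ring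
    _ = C (R := ℝ) (1 / ((m.factorial : ℝ) * ((m : ℝ) + 1) ^ k)) * ((m : ℝ⟦X⟧) * logSeries ^ m) := by
          rw [pow_key]
    _ = _ := by
          rw [← map_natCast (C (R := ℝ)) m, ← mul_assoc, ← map_mul, mul_comm (1 / ((m.factorial : ℝ) * ((m : ℝ) + 1) ^ k)) ((m:ℝ)),
            lif_scalar k m, map_sub, sub_mul]

lemma starId (k : ℤ) :
    logSeries * ((1 + X) * d⁄dX ℝ (psComp (Lif k) logSeries)) =
      psComp (Lif (k-1)) logSeries - psComp (Lif k) logSeries := by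
  ext n
  have h1 : coeff (R := ℝ) n (logSeries * ((1 + X) * d⁄dX ℝ (psComp (Lif k) logSeries))) =
      coeff (R := ℝ) n (logSeries * ((1 + X) * d⁄dX ℝ (trS k (n+1)))) := by
    apply coeff_mul_congr
    intro j hj
    apply coeff_mul_congr
    intro i hi
    refine coeff_derivative_congr (n := j) ?_ i hi
    intro i2 hi2
    exact coeff_psComp_Lif_eq_trS k (by omega)
  rw [h1, key_trS, map_sub, map_sub,
    coeff_psComp_Lif_eq_trS (k-1) (Nat.le_succ n), coeff_psComp_Lif_eq_trS k (Nat.le_succ n)]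

lemma logSeries_eq_X_mul_Dlog : logSeries = X * Dlog := by
  ext n
  cases n with
  | zero =>
    rw [coeff_zero_eq_constantCoeff, map_mul, constantCoeff_X, zero_mul]
    simp [logSeries, ← coeff_zero_eq_constantCoeff]
  | succ n =>
    rw [coeff_succ_X_mul]
    simp only [logSeries, Dlog, coeff_mk, Nat.succ_ne_zero, if_false]
    push_cast
    rw [pow_succ, pow_succ]
    ring

lemma dlog_mul_inv : Dlog * Dlog⁻¹ = 1 := by
  apply PowerSeries.mul_inv_cancel
  simp [Dlog, ← coeff_zero_eq_constantCoeff]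

lemma starstar (k : ℤ) :
    X * ((1 + X) * d⁄dX ℝ (psComp (Lif k) logSeries)) =
      Dlog⁻¹ * (psComp (Lif (k-1)) logSeries - psComp (Lif k) logSeries) := by
  have h : X * Dlog * ((1 + X) * d⁄dX ℝ (psComp (Lif k) logSeries)) =
      psComp (Lif (k-1)) logSeries - psComp (Lif k) logSeries := by
    rw [← logSeries_eq_X_mul_Dlog]; exact starId k
  linear_combination Dlog⁻¹ * h -
    X * ((1 + X) * d⁄dX ℝ (psComp (Lif k) logSeries)) * dlog_mul_inv

section rec
variable (k : ℤ)

noncomputable def cc (n : ℕ) : ℝ := coeff (R := ℝ) n (psComp (Lif k) logSeries)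
noncomputable def aa (n : ℕ) : ℝ :=
  coeff (R := ℝ) n (Dlog⁻¹ * (psComp (Lif (k-1)) logSeries - psComp (Lif k) logSeries))

lemma aa_zero : aa k 0 = 0 := by
  rw [aa, ← starstar, coeff_zero_eq_constantCoeff, map_mul, constantCoeff_X, zero_mul]

lemma aa_rec (n : ℕ) :
    ((n : ℝ) + 1) * cc k (n+1) + (n : ℝ) * cc k n = aa k (n+1) := by
  rw [aa, ← starstar, coeff_succ_X_mul]
  have hG : (1 + X) * d⁄dX ℝ (psComp (Lif k) logSeries) =
      d⁄dX ℝ (psComp (Lif k) logSeries) + X * d⁄dX ℝ (psComp (Lif k) logSeries) := by ring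
  rw [hG, map_add, coeff_derivative]
  cases n with
  | zero =>
    rw [coeff_zero_eq_constantCoeff, map_mul, constantCoeff_X, zero_mul]
    simp [cc]
  | succ m =>
    rw [coeff_succ_X_mul, coeff_derivative]
    simp only [cc]
    push_cast
    ring

lemma cc_eq_sum (n : ℕ) :
    (n : ℝ) * cc k n = ∑ l ∈ Finset.range (n+1), (-1 : ℝ) ^ (n - l) * aa k l := by
  induction n with
  | zero => simp [aa_zero]
  | succ n ih =>
    rw [Finset.sum_range_succ, Nat.sub_self, pow_zero, one_mul]
    have hshift : ∑ l ∈ Finset.range (n+1), (-1 : ℝ) ^ (n + 1 - l) * aa k l =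
        -∑ l ∈ Finset.range (n+1), (-1 : ℝ) ^ (n - l) * aa k l := by
      rw [← Finset.sum_neg_distrib]
      refine Finset.sum_congr rfl fun l hl => ?_
      rw [Finset.mem_range] at hl
      have : n + 1 - l = (n - l) + 1 := by omega
      rw [this, pow_succ]
      ring
    rw [hshift, ← ih]
    have h := aa_rec k n
    push_cast
    linarith
end rec

lemma psComp_one : psComp 1 logSeries = 1 := by
  ext n
  rw [psComp, coeff_mk]
  rw [Finset.sum_eq_single 0]
  · rw [pow_zero]; simp
  · intro m hm hm0
    rw [coeff_one, if_neg hm0, zero_mul]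
  · intro h; simp at h

lemma polyCauchy_zero_eq (k : ℤ) (n : ℕ) : polyCauchy k n 0 = (n.factorial : ℝ) * cc k n := by
  rw [polyCauchy, neg_zero, rescale_zero]
  have : psComp ((C (R := ℝ)) ((constantCoeff (R := ℝ)) (exp ℝ))) logSeries = 1 := by
    rw [constantCoeff_exp, map_one, psComp_one]
  rw [RingHom.comp_apply] at *
  rw [this, mul_one, cc]

/-- Lemma 6 of the paper. -/
theorem polyCauchyNumber_eq_T_sum (k : ℤ) (n : ℕ) (hn : 1 ≤ n) :
    polyCauchy k n 0 =
      (1 / (n : ℝ)) * ∑ l ∈ Finset.range (n + 1),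
        (-1 : ℝ) ^ (n - l) * ((n - l).factorial : ℝ) * (n.choose l : ℝ) *
          (T 1 (k - 1) l - T 1 k l) := by
  have hsum : ∀ l ∈ Finset.range (n+1),
      (-1 : ℝ) ^ (n - l) * ((n - l).factorial : ℝ) * (n.choose l : ℝ) *
        (T 1 (k - 1) l - T 1 k l) =
      (n.factorial : ℝ) * ((-1 : ℝ) ^ (n - l) * aa k l) := by
    intro l hl
    rw [Finset.mem_range] at hl
    have hTl : T 1 (k-1) l - T 1 k l = (l.factorial : ℝ) * aa k l := by
      rw [T, T, pow_one, aa, mul_sub, map_sub, mul_sub]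
    have hfact : (n.choose l : ℝ) * (l.factorial : ℝ) * ((n - l).factorial : ℝ) =
        (n.factorial : ℝ) := by
      rw [← Nat.cast_mul, ← Nat.cast_mul,
        Nat.choose_mul_factorial_mul_factorial (Nat.lt_succ_iff.mp hl)]
    rw [hTl]
    linear_combination ((-1 : ℝ) ^ (n - l) * aa k l) * hfact
  rw [Finset.sum_congr rfl hsum, ← Finset.mul_sum, ← cc_eq_sum, polyCauchy_zero_eq]
  have hn0 : (n : ℝ) ≠ 0 := by positivity
  field_simp
end

section
/- For every integer k and every integer n ≥ 1, the derivative of the poly-Cauchy polynomial of the first kind satisfies (d/dx) C_n^(k)(x) = (-1)^n n! Σ_{l=0}^{n-1} ( (-1)^l / ((n-l) l!) ) C_l^(k)(x). -/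
open PowerSeries Finset

lemma logSeries_const : PowerSeries.constantCoeff (R := ℝ) logSeries = 0 := by
  rw [← PowerSeries.coeff_zero_eq_constantCoeff_apply]
  simp [logSeries]

lemma coeff_pow_zero_of_lt {G : PowerSeries ℝ} (hG : PowerSeries.constantCoeff (R := ℝ) G = 0)
    {m i : ℕ} (h : i < m) : PowerSeries.coeff (R := ℝ) i (G ^ m) = 0 := by
  have hX : (PowerSeries.X : PowerSeries ℝ) ^ m ∣ G ^ m :=
    pow_dvd_pow_of_dvd (PowerSeries.X_dvd_iff.2 hG) m
  exact PowerSeries.X_pow_dvd_iff.1 hX i h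

lemma psComp_X_mul (F G : PowerSeries ℝ) (hG : PowerSeries.constantCoeff (R := ℝ) G = 0) :
    psComp (PowerSeries.X * F) G = G * psComp F G := by
  ext n
  rw [PowerSeries.coeff_mul, Finset.Nat.sum_antidiagonal_eq_sum_range_succ_mk]
  simp only [psComp, PowerSeries.coeff_mk]
  rw [Finset.sum_range_succ']
  have h0 : (PowerSeries.coeff (R := ℝ) 0) (PowerSeries.X * F) = 0 := by
    rw [PowerSeries.coeff_zero_eq_constantCoeff_apply]
    simp
  rw [h0, zero_mul, add_zero]
  simp only [PowerSeries.coeff_succ_X_mul]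
  have hinner : ∀ i ∈ Finset.range (n + 1),
      PowerSeries.coeff (R := ℝ) i G * ∑ m ∈ Finset.range (n - i + 1),
        PowerSeries.coeff (R := ℝ) m F * PowerSeries.coeff (R := ℝ) (n - i) (G ^ m)
      = ∑ m ∈ Finset.range (n + 1),
        PowerSeries.coeff (R := ℝ) m F * (PowerSeries.coeff (R := ℝ) i G * PowerSeries.coeff (R := ℝ) (n - i) (G ^ m)) := by
    intro i hi
    rw [Finset.mul_sum]
    rw [← Finset.sum_subset (Finset.range_subset_range.2 (by omega : n - i + 1 ≤ n + 1))]
    · exact Finset.sum_congr rfl fun m _ => by ring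
    · intro m hm hm'
      have hlt : n - i < m := by
        simp only [Finset.mem_range] at hm hm'
        omega
      rw [coeff_pow_zero_of_lt hG hlt, mul_zero, mul_zero]
  rw [Finset.sum_congr rfl hinner, Finset.sum_comm]
  have houter : ∀ m ∈ Finset.range (n + 1),
      (∑ i ∈ Finset.range (n + 1),
        PowerSeries.coeff (R := ℝ) m F * (PowerSeries.coeff (R := ℝ) i G * PowerSeries.coeff (R := ℝ) (n - i) (G ^ m)))
      = PowerSeries.coeff (R := ℝ) m F * PowerSeries.coeff (R := ℝ) n (G ^ (m + 1)) := by
    intro m _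
    rw [← Finset.mul_sum, pow_succ', PowerSeries.coeff_mul,
      Finset.Nat.sum_antidiagonal_eq_sum_range_succ_mk]
  rw [Finset.sum_congr rfl houter, Finset.sum_range_succ,
    coeff_pow_zero_of_lt hG (Nat.lt_succ_self n), mul_zero, add_zero]

lemma coeff_E (x : ℝ) (j : ℕ) :
    PowerSeries.coeff (R := ℝ) j (psComp (PowerSeries.rescale (-x) (PowerSeries.exp ℝ)) logSeries)
      = ∑ m ∈ Finset.range (j + 1),
          (-x) ^ m * (PowerSeries.coeff (R := ℝ) j (logSeries ^ m) / (m.factorial : ℝ)) := by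
  simp only [psComp, PowerSeries.coeff_mk, PowerSeries.coeff_rescale, PowerSeries.coeff_exp]
  refine Finset.sum_congr rfl fun m _ => ?_
  have h : (algebraMap ℚ ℝ) (1 / (m.factorial : ℚ)) = 1 / (m.factorial : ℝ) := by
    rw [map_div₀, map_one, map_natCast]
  rw [h]
  ring

lemma hasDerivAt_E (j : ℕ) (x : ℝ) :
    HasDerivAt (fun y => PowerSeries.coeff (R := ℝ) j
        (psComp (PowerSeries.rescale (-y) (PowerSeries.exp ℝ)) logSeries))
      (-(PowerSeries.coeff (R := ℝ) j (logSeries *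
          psComp (PowerSeries.rescale (-x) (PowerSeries.exp ℝ)) logSeries))) x := by
  have hfun : (fun y => PowerSeries.coeff (R := ℝ) j
        (psComp (PowerSeries.rescale (-y) (PowerSeries.exp ℝ)) logSeries))
      = fun y => ∑ m ∈ Finset.range (j + 1),
          (-y) ^ m * (PowerSeries.coeff (R := ℝ) j (logSeries ^ m) / (m.factorial : ℝ)) :=
    funext fun y => coeff_E y j
  rw [hfun]
  have hderiv : HasDerivAt (fun y => ∑ m ∈ Finset.range (j + 1),
      (-y) ^ m * (PowerSeries.coeff (R := ℝ) j (logSeries ^ m) / (m.factorial : ℝ)))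
      (∑ m ∈ Finset.range (j + 1),
        ((m : ℝ) * (-x) ^ (m - 1) * (-1)) *
          (PowerSeries.coeff (R := ℝ) j (logSeries ^ m) / (m.factorial : ℝ))) x := by
    apply HasDerivAt.fun_sum
    intro m _
    exact ((hasDerivAt_neg x).pow m).mul_const _
  convert hderiv using 1
  rw [← psComp_X_mul _ _ logSeries_const]
  simp only [psComp, PowerSeries.coeff_mk]
  rw [← Finset.sum_neg_distrib]
  rw [Finset.sum_range_succ', Finset.sum_range_succ']
  congr 1
  · refine Finset.sum_congr rfl fun m _ => ?_
    rw [PowerSeries.coeff_succ_X_mul, PowerSeries.coeff_rescale, PowerSeries.coeff_exp]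
    have h : (algebraMap ℚ ℝ) (1 / (m.factorial : ℚ)) = 1 / (m.factorial : ℝ) := by
      rw [map_div₀, map_one, map_natCast]
    rw [h]
    have hm : (m.factorial : ℝ) ≠ 0 := Nat.cast_ne_zero.2 m.factorial_ne_zero
    have hfac : ((m + 1).factorial : ℝ) = (m + 1) * m.factorial := by
      rw [Nat.factorial_succ]; push_cast; ring
    rw [hfac]
    have hm1 : ((m : ℝ) + 1) ≠ 0 := by positivity
    simp only [Nat.add_sub_cancel]
    push_cast
    field_simp
  · simp [PowerSeries.coeff_zero_eq_constantCoeff_apply]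

/-- derivative of the poly-Cauchy polynomial. -/
theorem deriv_polyCauchy (k : ℤ) (n : ℕ) (hn : 1 ≤ n) (x : ℝ) :
    deriv (fun y => polyCauchy k n y) x =
      (-1 : ℝ) ^ n * (n.factorial : ℝ) *
        ∑ l ∈ Finset.range n,
          ((-1 : ℝ) ^ l / (((n : ℝ) - l) * (l.factorial : ℝ))) * polyCauchy k l x := by
  set A := psComp (Lif k) logSeries with hA
  set G := A * psComp (PowerSeries.rescale (-x) (PowerSeries.exp ℝ)) logSeries with hG
  have hd : HasDerivAt (fun y => polyCauchy k n y)
      (-(↑n.factorial * PowerSeries.coeff (R := ℝ) n (logSeries * G))) x := by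
    have h1 : (fun y => polyCauchy k n y) = fun y =>
        (n.factorial : ℝ) * ∑ p ∈ Finset.HasAntidiagonal.antidiagonal n,
          PowerSeries.coeff (R := ℝ) p.1 A *
            PowerSeries.coeff (R := ℝ) p.2 (psComp (PowerSeries.rescale (-y) (PowerSeries.exp ℝ)) logSeries) := by
      funext y
      rw [polyCauchy, PowerSeries.coeff_mul]
    rw [h1]
    have h2 := (HasDerivAt.fun_sum (fun p (_ : p ∈ Finset.HasAntidiagonal.antidiagonal n) =>
        ((hasDerivAt_E p.2 x).const_mul (PowerSeries.coeff (R := ℝ) p.1 A)))).const_mul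
        (n.factorial : ℝ)
    refine h2.congr_deriv ?_
    symm
    have hcm : logSeries * G
        = A * (logSeries * psComp (PowerSeries.rescale (-x) (PowerSeries.exp ℝ)) logSeries) := by
      rw [hG]; ring
    rw [hcm, PowerSeries.coeff_mul, Finset.mul_sum, Finset.mul_sum, ← Finset.sum_neg_distrib]
    exact Finset.sum_congr rfl fun p _ => by ring
  rw [hd.deriv]
  rw [PowerSeries.coeff_mul, Finset.Nat.sum_antidiagonal_eq_sum_range_succ_mk,
    Finset.sum_range_succ']
  have h0 : PowerSeries.coeff (R := ℝ) 0 logSeries = 0 := by simp [logSeries]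
  rw [h0, zero_mul, add_zero]
  rw [← Finset.sum_range_reflect
    (fun i => PowerSeries.coeff (R := ℝ) (i + 1) logSeries * PowerSeries.coeff (R := ℝ) (n - (i + 1)) G)]
  rw [Finset.mul_sum, Finset.mul_sum, ← Finset.sum_neg_distrib]
  refine Finset.sum_congr rfl fun l hl => ?_
  have hln : l < n := Finset.mem_range.1 hl
  have h1 : n - 1 - l + 1 = n - l := by omega
  have h2 : n - (n - l) = l := by omega
  rw [h1, h2]
  have h3 : PowerSeries.coeff (R := ℝ) (n - l) logSeries = (-1) ^ (n - l + 1) / ((n - l : ℕ) : ℝ) := by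
    simp only [logSeries, PowerSeries.coeff_mk]
    rw [if_neg (by omega)]
  rw [h3]
  have h4 : polyCauchy k l x = (l.factorial : ℝ) * PowerSeries.coeff (R := ℝ) l G := rfl
  rw [h4]
  have h5 : ((n - l : ℕ) : ℝ) = (n : ℝ) - l := by
    push_cast [Nat.cast_sub hln.le]; ring
  have hs : ((-1 : ℝ)) ^ (n - l + 1) = -((-1 : ℝ) ^ n * (-1) ^ l) := by
    have : n + l = (n - l) + 2 * l := by omega
    have h6 : ((-1 : ℝ)) ^ (n + l) = (-1) ^ (n - l) := by
      rw [this, pow_add, pow_mul]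
      simp
    rw [pow_succ, ← h6, pow_add]
    ring
  rw [hs, h5]
  have hl0 : (l.factorial : ℝ) ≠ 0 := Nat.cast_ne_zero.2 l.factorial_ne_zero
  have hnl : (n : ℝ) - l ≠ 0 := by
    have : (l : ℝ) < n := by exact_mod_cast hln
    linarith
  field_simp
end
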